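/- (Symplectic rectification of the quadratic angular momentum, Lemma 6.1, part 2.) Let γ ≥ 1 and let β(θ) := ∫₀^θ (1/g_γ(s) − 1) ds. Then the map θ ↦ θ + β(θ) is a strictly increasing C^∞ diffeomorphism of ℝ satisfying (θ+2π) + β(θ+2π) = θ + β(θ) + 2π, and for every continuous 2π-periodic function q: ℝ → ℝ one has ∫₀^{2π} q(θ+β(θ))² · (1+β'(θ))² · g_γ(θ) dθ = ∫₀^{2π} q(y)² dy. -/

import Mathlib

open Real MeasureTheory

/-- `g_γ(θ) := γ cos²θ + γ⁻¹ sin²θ`. -/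
noncomputable def gell (γ θ : ℝ) : ℝ := γ * Real.cos θ ^ 2 + γ⁻¹ * Real.sin θ ^ 2

/-- `β(θ) := ∫₀^θ (1/g_γ(s) − 1) ds`. -/
noncomputable def betaStr (γ θ : ℝ) : ℝ := ∫ s in (0:ℝ)..θ, (1 / gell γ s - 1)

/-- Explicit closed form for β. -/
noncomputable def Gcorr (γ θ : ℝ) : ℝ :=
  Real.arctan ((γ⁻¹ - 1) * (Real.sin θ * Real.cos θ) /
    (Real.cos θ ^ 2 + γ⁻¹ * Real.sin θ ^ 2))

lemma gell_pos {γ : ℝ} (hγ : 0 < γ) (θ : ℝ) : 0 < gell γ θ := by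
  have h := Real.sin_sq_add_cos_sq θ
  have h1 : 0 < γ⁻¹ := inv_pos.mpr hγ
  unfold gell
  rcases eq_or_ne (Real.cos θ) 0 with h0 | h0
  · have hs2 : Real.sin θ ^ 2 = 1 := by rw [h0] at h; simpa using h
    rw [h0, hs2]; simpa using h1
  · have h2 : 0 < Real.cos θ ^ 2 := by positivity
    nlinarith [sq_nonneg (Real.sin θ)]

lemma dpos {γ : ℝ} (hγ : 0 < γ) (θ : ℝ) :
    0 < Real.cos θ ^ 2 + γ⁻¹ * Real.sin θ ^ 2 := by
  have h := Real.sin_sq_add_cos_sq θ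
  have h1 : 0 < γ⁻¹ := inv_pos.mpr hγ
  rcases eq_or_ne (Real.cos θ) 0 with h0 | h0
  · have hs2 : Real.sin θ ^ 2 = 1 := by rw [h0] at h; simpa using h
    rw [h0, hs2]; simpa using h1
  · have h2 : 0 < Real.cos θ ^ 2 := by positivity
    nlinarith [sq_nonneg (Real.sin θ)]

set_option maxHeartbeats 1000000 in

lemma alg (γ a b : ℝ) (hγ : 0 < γ) (hab : a + b = 1) (ha : 0 ≤ a) (hb : 0 ≤ b) :
    1 / (γ * b + γ⁻¹ * a) - 1 =
      1 / (1 + (γ⁻¹ - 1) ^ 2 * (a * b) / (b + γ⁻¹ * a) ^ 2) *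
        (((γ⁻¹ - 1) * (b - a) * (b + γ⁻¹ * a) - (γ⁻¹ - 1) ^ 2 * (a * b) * 2) /
          (b + γ⁻¹ * a) ^ 2) := by
  have ha' : a = 1 - b := by linarith
  subst ha'
  have hγ0 : γ ≠ 0 := ne_of_gt hγ
  have hγi : 0 < γ⁻¹ := inv_pos.mpr hγ
  have hd : 0 < b + γ⁻¹ * (1 - b) := by
    rcases eq_or_lt_of_le hb with h | h
    · rw [← h]; norm_num; exact hγ
    · have h2 : 0 ≤ γ⁻¹ * (1 - b) := mul_nonneg hγi.le ha
      linarith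
  have hg : 0 < γ * b + γ⁻¹ * (1 - b) := by
    rcases eq_or_lt_of_le hb with h | h
    · rw [← h]; norm_num; exact hγ
    · have h1 : 0 < γ * b := mul_pos hγ h
      have h2 : 0 ≤ γ⁻¹ * (1 - b) := mul_nonneg hγi.le ha
      linarith
  have hX : 0 ≤ (γ⁻¹ - 1) ^ 2 * ((1 - b) * b) :=
    mul_nonneg (sq_nonneg _) (mul_nonneg ha hb)
  have hD : 0 < (b + γ⁻¹ * (1 - b)) ^ 2 + (γ⁻¹ - 1) ^ 2 * ((1 - b) * b) :=
    add_pos_of_pos_of_nonneg (pow_pos hd 2) hX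
  have hd2 : ((b + γ⁻¹ * (1 - b)) ^ 2 : ℝ) ≠ 0 := pow_ne_zero 2 hd.ne'
  calc 1 / (γ * b + γ⁻¹ * (1 - b)) - 1
      = (1 - (γ * b + γ⁻¹ * (1 - b))) / (γ * b + γ⁻¹ * (1 - b)) := by
        rw [sub_div, div_self hg.ne']
    _ = ((γ⁻¹ - 1) * (b - (1 - b)) * (b + γ⁻¹ * (1 - b)) -
          (γ⁻¹ - 1) ^ 2 * ((1 - b) * b) * 2) /
        ((b + γ⁻¹ * (1 - b)) ^ 2 + (γ⁻¹ - 1) ^ 2 * ((1 - b) * b)) := by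
        rw [div_eq_div_iff hg.ne' hD.ne']
        field_simp
        ring
    _ = 1 / (1 + (γ⁻¹ - 1) ^ 2 * ((1 - b) * b) / (b + γ⁻¹ * (1 - b)) ^ 2) *
        (((γ⁻¹ - 1) * (b - (1 - b)) * (b + γ⁻¹ * (1 - b)) -
          (γ⁻¹ - 1) ^ 2 * ((1 - b) * b) * 2) / (b + γ⁻¹ * (1 - b)) ^ 2) := by
        rw [show (1 + (γ⁻¹ - 1) ^ 2 * ((1 - b) * b) / (b + γ⁻¹ * (1 - b)) ^ 2)
            = ((b + γ⁻¹ * (1 - b)) ^ 2 + (γ⁻¹ - 1) ^ 2 * ((1 - b) * b)) /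
              (b + γ⁻¹ * (1 - b)) ^ 2 from by rw [add_div, div_self hd2]]
        rw [one_div_div, div_mul_div_comm,
          mul_comm ((b + γ⁻¹ * (1 - b)) ^ 2)
            ((γ⁻¹ - 1) * (b - (1 - b)) * (b + γ⁻¹ * (1 - b)) -
              (γ⁻¹ - 1) ^ 2 * ((1 - b) * b) * 2),
          mul_div_mul_right _ _ hd2]
lemma hasDerivAt_Gcorr {γ : ℝ} (hγ : 0 < γ) (θ : ℝ) :
    HasDerivAt (Gcorr γ) (1 / gell γ θ - 1) θ := by
  have hd0 : (0:ℝ) < Real.cos θ ^ 2 + γ⁻¹ * Real.sin θ ^ 2 := dpos hγ θ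
  have hnum : HasDerivAt (fun θ : ℝ => (γ⁻¹ - 1) * (Real.sin θ * Real.cos θ))
      ((γ⁻¹ - 1) * (Real.cos θ * Real.cos θ + Real.sin θ * -Real.sin θ)) θ :=
    ((Real.hasDerivAt_sin θ).mul (Real.hasDerivAt_cos θ)).const_mul _
  have hden : HasDerivAt (fun θ : ℝ => Real.cos θ ^ 2 + γ⁻¹ * Real.sin θ ^ 2)
      ((2 * Real.cos θ ^ 1 * -Real.sin θ) + γ⁻¹ * (2 * Real.sin θ ^ 1 * Real.cos θ)) θ :=
    ((Real.hasDerivAt_cos θ).pow 2).add (((Real.hasDerivAt_sin θ).pow 2).const_mul _)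
  have hu := hnum.div hden (ne_of_gt hd0)
  have hG := (Real.hasDerivAt_arctan
    ((γ⁻¹ - 1) * (Real.sin θ * Real.cos θ) /
      (Real.cos θ ^ 2 + γ⁻¹ * Real.sin θ ^ 2))).comp θ hu
  have key := alg γ (Real.sin θ ^ 2) (Real.cos θ ^ 2) hγ (Real.sin_sq_add_cos_sq θ)
    (sq_nonneg _) (sq_nonneg _)
  refine hG.congr_deriv (Eq.symm ?_)
  unfold gell
  rw [key, div_pow, mul_pow, mul_pow]
  congr 1
  congr 1
  ring

lemma continuous_integrand {γ : ℝ} (hγ : 0 < γ) :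
    Continuous (fun s : ℝ => 1 / gell γ s - 1) := by
  have hc : Continuous (gell γ) := by
    unfold gell; continuity
  exact (continuous_const.div hc (fun x => (gell_pos hγ x).ne')).sub continuous_const

lemma Gcorr_zero (γ : ℝ) : Gcorr γ 0 = 0 := by simp [Gcorr]

lemma betaStr_eq {γ : ℝ} (hγ : 0 < γ) : betaStr γ = Gcorr γ := by
  funext θ
  have h := intervalIntegral.integral_eq_sub_of_hasDerivAt
    (f := Gcorr γ) (f' := fun s => 1 / gell γ s - 1) (a := 0) (b := θ)
    (fun x _ => hasDerivAt_Gcorr hγ x)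
    ((continuous_integrand hγ).intervalIntegrable 0 θ)
  unfold betaStr
  rw [h, Gcorr_zero, sub_zero]

lemma contDiff_Gcorr {γ : ℝ} (hγ : 0 < γ) : ContDiff ℝ (⊤ : ℕ∞) (Gcorr γ) := by
  have hu : ContDiff ℝ (⊤ : ℕ∞) (fun θ : ℝ =>
      (γ⁻¹ - 1) * (Real.sin θ * Real.cos θ) / (Real.cos θ ^ 2 + γ⁻¹ * Real.sin θ ^ 2)) := by
    apply ContDiff.div
    · exact (contDiff_const.mul (Real.contDiff_sin.mul Real.contDiff_cos))
    · exact (Real.contDiff_cos.pow 2).add (contDiff_const.mul (Real.contDiff_sin.pow 2))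
    · exact fun x => (dpos hγ x).ne'
  exact Real.contDiff_arctan.comp hu

lemma continuous_inv_gell {γ : ℝ} (hγ : 0 < γ) : Continuous (fun s : ℝ => 1 / gell γ s) := by
  have hc : Continuous (gell γ) := by unfold gell; continuity
  exact continuous_const.div hc (fun x => (gell_pos hγ x).ne')

/-- Symplectic rectification of the quadratic angular momentum (Lemma 6.1, part 2). -/
theorem rectification (γ : ℝ) (hγ : 1 ≤ γ) :
    -- θ ↦ θ + β(θ) is a strictly increasing C^∞ diffeomorphism of ℝ
    StrictMono (fun θ => θ + betaStr γ θ) ∧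
    ContDiff ℝ (⊤ : ℕ∞) (fun θ : ℝ => θ + betaStr γ θ) ∧
    Function.Bijective (fun θ : ℝ => θ + betaStr γ θ) ∧
    -- it commutes with the translation by 2π
    (∀ θ : ℝ, (θ + 2 * π) + betaStr γ (θ + 2 * π) = (θ + betaStr γ θ) + 2 * π) ∧
    -- change of variables for the quadratic angular momentum
    (∀ q : ℝ → ℝ, Continuous q → (∀ y, q (y + 2 * π) = q y) →
      (∫ θ in (0:ℝ)..(2 * π),
          q (θ + betaStr γ θ) ^ 2 * (1 + deriv (betaStr γ) θ) ^ 2 * gell γ θ)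
        = ∫ y in (0:ℝ)..(2 * π), q y ^ 2) := by
  have hγ0 : 0 < γ := lt_of_lt_of_le one_pos hγ
  have h_eq : betaStr γ = Gcorr γ := betaStr_eq hγ0
  have hbd : ∀ θ, HasDerivAt (betaStr γ) (1 / gell γ θ - 1) θ := by
    rw [h_eq]; exact fun θ => hasDerivAt_Gcorr hγ0 θ
  have hderiv : ∀ θ, HasDerivAt (fun θ : ℝ => θ + betaStr γ θ) (1 / gell γ θ) θ := by
    intro θ
    have h := (hasDerivAt_id θ).add (hbd θ)
    refine h.congr_deriv ?_
    ring
  have hmono : StrictMono (fun θ : ℝ => θ + betaStr γ θ) := by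
    apply strictMono_of_deriv_pos
    intro x
    rw [(hderiv x).deriv]
    exact div_pos one_pos (gell_pos hγ0 x)
  have hsmooth : ContDiff ℝ (⊤ : ℕ∞) (fun θ : ℝ => θ + betaStr γ θ) := by
    rw [h_eq]
    exact contDiff_id.add (contDiff_Gcorr hγ0)
  have hbetalt : ∀ θ, |betaStr γ θ| < π / 2 := by
    intro θ
    rw [h_eq]
    unfold Gcorr
    rw [abs_lt]
    exact ⟨Real.neg_pi_div_two_lt_arctan _, Real.arctan_lt_pi_div_two _⟩
  have hsurj : Function.Surjective (fun θ : ℝ => θ + betaStr γ θ) := by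
    apply Continuous.surjective hsmooth.continuous
    · apply Filter.tendsto_atTop_mono (f := fun θ : ℝ => θ - π / 2)
      · intro θ
        have := (abs_lt.mp (hbetalt θ)).1
        linarith
      · exact Filter.tendsto_atTop_add_const_right _ _ Filter.tendsto_id
    · apply Filter.tendsto_atBot_mono (f := fun θ : ℝ => θ + π / 2)
      · intro θ
        have := (abs_lt.mp (hbetalt θ)).2
        linarith
      · exact Filter.tendsto_atBot_add_const_right _ _ Filter.tendsto_id
  have hper : ∀ θ : ℝ, betaStr γ (θ + 2 * π) = betaStr γ θ := by
    intro θ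
    rw [h_eq]
    unfold Gcorr
    rw [Real.sin_add_two_pi, Real.cos_add_two_pi]
  refine ⟨hmono, hsmooth, ⟨hmono.injective, hsurj⟩, fun θ => by rw [hper θ]; ring, ?_⟩
  intro q hq _
  have hφ0 : (0:ℝ) + betaStr γ 0 = 0 := by
    rw [h_eq, Gcorr_zero, add_zero]
  have hφ2π : (2*π:ℝ) + betaStr γ (2*π) = 2*π := by
    have : Gcorr γ (2*π) = 0 := by
      unfold Gcorr
      rw [show (2*π:ℝ) = 0 + 2*π by ring, Real.sin_add_two_pi, Real.cos_add_two_pi]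
      simp
    rw [h_eq, this, add_zero]
  have hgq : Continuous fun y => q y ^ 2 := hq.pow 2
  have hchg := intervalIntegral.integral_comp_smul_deriv
    (f := fun θ : ℝ => θ + betaStr γ θ) (f' := fun θ => 1 / gell γ θ)
    (g := fun y => q y ^ 2) (a := 0) (b := 2*π)
    (fun x _ => hderiv x) (continuous_inv_gell hγ0).continuousOn hgq
  calc (∫ θ in (0:ℝ)..(2 * π),
          q (θ + betaStr γ θ) ^ 2 * (1 + deriv (betaStr γ) θ) ^ 2 * gell γ θ)
      = ∫ θ in (0:ℝ)..(2 * π),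
          (1 / gell γ θ) • ((fun y => q y ^ 2) ∘ (fun θ : ℝ => θ + betaStr γ θ)) θ := by
        apply intervalIntegral.integral_congr
        intro x _
        show q (x + betaStr γ x) ^ 2 * (1 + deriv (betaStr γ) x) ^ 2 * gell γ x =
          (1 / gell γ x) • ((fun y => q y ^ 2) ∘ fun θ : ℝ => θ + betaStr γ θ) x
        rw [(hbd x).deriv]
        simp only [Function.comp, smul_eq_mul]
        have hgne := (gell_pos hγ0 x).ne'
        field_simp
        ring
    _ = ∫ y in ((0:ℝ) + betaStr γ 0)..((2*π:ℝ) + betaStr γ (2*π)), q y ^ 2 := hchg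
    _ = ∫ y in (0:ℝ)..(2 * π), q y ^ 2 := by rw [hφ0, hφ2π]
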